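/- Expected ℓ₂ loss of the RR empirical estimator: fix inputs X₁,…,Xₙ ∈ 𝒳 with empirical distribution p, and let each Yᵢ be an independent ε-RR obfuscation of Xᵢ. For x ∈ 𝒳, let c(x) = #{i : Yᵢ = x} and p̂(x) = (c(x)/n − ν)/(μ − ν) with μ = e^ε/(k+e^ε−1), ν = 1/(k+e^ε−1), k = |𝒳|. Then E[(p(x) − p̂(x))²] = (k+e^ε−2)/(n(e^ε−1)²) + p(x)(k−2)/(n(e^ε−1)). -/
import Mathlib


open Finset Real

/-- A probability mass function on a finite type. -/
def IsPmf {A : Type*} [Fintype A] (p : A → ℝ) : Prop :=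
  (∀ a, 0 ≤ p a) ∧ ∑ a, p a = 1

/-- Mutual information (in bits) of a joint pmf on `A × B`. -/
noncomputable def mi2 {A B : Type*} [Fintype A] [Fintype B] (p : A × B → ℝ) : ℝ :=
  ∑ a : A, ∑ b : B, p (a, b) *
    Real.logb 2 (p (a, b) / ((∑ b' : B, p (a, b')) * (∑ a' : A, p (a', b))))

lemma factorize {n : ℕ} {𝒳 : Type*} [Fintype 𝒳] [DecidableEq 𝒳] (F : Fin n → 𝒳 → ℝ) :
    ∑ ys : Fin n → 𝒳, ∏ i, F i (ys i) = ∏ i, ∑ y, F i y := by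
  rw [Finset.prod_univ_sum, Fintype.piFinset_univ]

lemma var_sum {n : ℕ} {𝒳 : Type*} [Fintype 𝒳] [DecidableEq 𝒳]
    (Q f : Fin n → 𝒳 → ℝ) (hQ : ∀ i, ∑ y, Q i y = 1)
    (hf0 : ∀ i, ∑ y, Q i y * f i y = 0) :
    ∑ ys : Fin n → 𝒳, (∏ i, Q i (ys i)) * (∑ i, f i (ys i)) ^ 2
      = ∑ i, ∑ y, Q i y * f i y ^ 2 := by
  have key : ∀ i j : Fin n,
      ∑ ys : Fin n → 𝒳, (∏ k, Q k (ys k)) * (f i (ys i) * f j (ys j))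
        = if i = j then ∑ y, Q i y * f i y ^ 2 else 0 := by
    intro i j
    have h1 : ∀ ys : Fin n → 𝒳, (∏ k, Q k (ys k)) * (f i (ys i) * f j (ys j))
        = ∏ k, (Q k (ys k) * ((if k = i then f i (ys k) else 1) * (if k = j then f j (ys k) else 1))) := by
      intro ys
      rw [Finset.prod_mul_distrib, Finset.prod_mul_distrib]
      congr 1
      congr 1
      · rw [Finset.prod_ite_eq' univ i (fun k => f i (ys k))]; simp
      · rw [Finset.prod_ite_eq' univ j (fun k => f j (ys k))]; simp
    simp only [h1]
    rw [factorize (fun k y => Q k y * ((if k = i then f i y else 1) * if k = j then f j y else 1))]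
    by_cases hij : i = j
    · subst hij
      simp only [if_pos rfl]
      rw [Finset.prod_eq_single i]
      · refine Finset.sum_congr rfl fun y _ => ?_; simp [sq]
      · intro k _ hk
        simp only [if_neg hk, mul_one, one_mul, hQ k]
      · simp
    · rw [if_neg hij, Finset.prod_eq_zero (Finset.mem_univ i)]
      simp only [if_pos rfl, if_neg hij, mul_one]
      exact hf0 i
  have expand : ∀ ys : Fin n → 𝒳, (∑ i, f i (ys i)) ^ 2
      = ∑ i, ∑ j, f i (ys i) * f j (ys j) := by
    intro ys; rw [sq, Finset.sum_mul_sum]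
  simp only [expand, Finset.mul_sum]
  rw [Finset.sum_comm]
  have : ∀ i, ∑ ys : Fin n → 𝒳, ∑ j, (∏ k, Q k (ys k)) * (f i (ys i) * f j (ys j))
      = ∑ y, Q i y * f i y ^ 2 := by
    intro i
    rw [Finset.sum_comm]
    simp only [key]
    simp
  exact Finset.sum_congr rfl fun i _ => this i

lemma sum_ite_const {𝒳 : Type*} [Fintype 𝒳] [DecidableEq 𝒳] (a : 𝒳) (u v : ℝ) :
    ∑ y : 𝒳, (if y = a then u else v) = u + ((Fintype.card 𝒳 : ℝ) - 1) * v := by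
  have h : ∀ y : 𝒳, (if y = a then u else v) = v + (if y = a then u - v else 0) := by
    intro y; split <;> ring
  simp only [h, Finset.sum_add_distrib, Finset.sum_ite_eq' Finset.univ a (fun _ => u - v),
    Finset.sum_const, Finset.card_univ, Finset.mem_univ, if_pos, nsmul_eq_mul]
  ring

theorem stmt13 {𝒳 : Type*} [Fintype 𝒳] [DecidableEq 𝒳]
    (n : ℕ) (hn : 1 ≤ n) (ε : ℝ) (hε : 0 < ε) (hk : 2 ≤ Fintype.card 𝒳)
    (xs : Fin n → 𝒳) (x : 𝒳) :
    let k : ℝ := (Fintype.card 𝒳 : ℝ)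
    let μ : ℝ := Real.exp ε / (k + Real.exp ε - 1)
    let ν : ℝ := 1 / (k + Real.exp ε - 1)
    let Q : 𝒳 → 𝒳 → ℝ := fun a b => if b = a then μ else ν
    let p : 𝒳 → ℝ := fun a => ((Finset.univ.filter (fun i => xs i = a)).card : ℝ) / n
    let phat : (Fin n → 𝒳) → ℝ := fun ys =>
      (((Finset.univ.filter (fun i => ys i = x)).card : ℝ) / n - ν) / (μ - ν)
    (∑ ys : Fin n → 𝒳, (∏ i : Fin n, Q (xs i) (ys i)) * (p x - phat ys) ^ 2)
      = (k + Real.exp ε - 2) / (n * (Real.exp ε - 1) ^ 2)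
        + p x * (k - 2) / (n * (Real.exp ε - 1)) := by
  intro k μ ν Q p phat
  set E := Real.exp ε with hEdef
  have hE1 : 1 < E := by
    rw [hEdef]; calc (1:ℝ) = Real.exp 0 := by simp
    _ < Real.exp ε := Real.exp_lt_exp.2 hε
  have hk2 : (2:ℝ) ≤ k := by
    show (2:ℝ) ≤ (Fintype.card 𝒳 : ℝ); exact_mod_cast hk
  have hD0 : k + E - 1 ≠ 0 := by nlinarith
  have hn0 : (n:ℝ) ≠ 0 := by positivity
  have hμν : μ - ν ≠ 0 := by
    show E / (k + E - 1) - 1 / (k + E - 1) ≠ 0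
    rw [div_sub_div_same]
    exact div_ne_zero (by nlinarith) hD0
  -- the Bernoulli parameter of each coordinate
  set q : Fin n → ℝ := fun i => if xs i = x then μ else ν with hq
  set f : Fin n → 𝒳 → ℝ := fun i y => q i - (if y = x then 1 else 0) with hf
  have hQsum : ∀ i, ∑ y, Q (xs i) y = 1 := by
    intro i
    show ∑ y, (if y = xs i then μ else ν) = 1
    rw [sum_ite_const]
    show E / (k + E - 1) + (k - 1) * (1 / (k + E - 1)) = 1
    field_simp
    ring
  have hQx : ∀ i, Q (xs i) x = q i := by
    intro i
    show (if x = xs i then μ else ν) = (if xs i = x then μ else ν)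
    simp only [eq_comm]
  have hind : ∀ i (g : 𝒳 → ℝ), ∑ y, Q (xs i) y * (g y * (if y = x then 1 else 0))
      = Q (xs i) x * g x := by
    intro i g
    rw [Finset.sum_eq_single x]
    · simp
    · intro y _ hy; simp [hy]
    · simp
  have hf0 : ∀ i, ∑ y, Q (xs i) y * f i y = 0 := by
    intro i
    have : ∀ y, Q (xs i) y * f i y = Q (xs i) y * q i - Q (xs i) y * (1 * (if y = x then 1 else 0)) := by
      intro y; simp only [hf]; ring
    simp only [this, Finset.sum_sub_distrib, ← Finset.sum_mul, hQsum i, hind i (fun _ => 1), hQx i]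
    ring
  have hf2 : ∀ i, ∑ y, Q (xs i) y * f i y ^ 2 = q i * (1 - q i) := by
    intro i
    have hb : ∀ y : 𝒳, (if y = x then (1:ℝ) else 0) ^ 2 = (if y = x then 1 else 0) := by
      intro y; split <;> norm_num
    have : ∀ y, Q (xs i) y * f i y ^ 2
        = Q (xs i) y * (q i)^2 - Q (xs i) y * ((2 * q i) * (if y = x then 1 else 0))
          + Q (xs i) y * (1 * (if y = x then 1 else 0)) := by
      intro y; by_cases h : y = x <;>
        simp only [hf, h, eq_self_iff_true, if_true, if_false] <;> ring
    simp only [this, Finset.sum_add_distrib, Finset.sum_sub_distrib, ← Finset.sum_mul,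
      hQsum i, hind i (fun _ => 2 * q i), hind i (fun _ => 1), hQx i]
    ring
  -- rewrite the loss
  set m : ℕ := (Finset.univ.filter (fun i => xs i = x)).card with hm
  have hqsum : ∑ i, q i = m * μ + ((n : ℝ) - m) * ν := by
    rw [hq]
    rw [Finset.sum_ite, Finset.sum_const, Finset.sum_const]
    have hcard : (Finset.univ.filter (fun i => xs i = x)).card
        + (Finset.univ.filter (fun i => ¬ xs i = x)).card = n := by
      rw [Finset.card_filter_add_card_filter_not]; simp
    have h2 : ((Finset.univ.filter (fun i => ¬ xs i = x)).card : ℝ) = (n : ℝ) - m := by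
      rw [hm]
      push_cast [← hcard]
      ring
    simp only [nsmul_eq_mul, h2, hm]
  have hloss : ∀ ys : Fin n → 𝒳, (p x - phat ys) ^ 2
      = ((∑ i, f i (ys i)) / (n * (μ - ν)))^2 := by
    intro ys
    congr 1
    have hc : ((Finset.univ.filter (fun i => ys i = x)).card : ℝ)
        = ∑ i, (if ys i = x then (1:ℝ) else 0) := by
      rw [Finset.sum_ite, Finset.sum_const, Finset.sum_const]
      simp
    have hsf : ∑ i, f i (ys i) = (∑ i, q i) - ((Finset.univ.filter (fun i => ys i = x)).card : ℝ) := by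
      simp only [hf, Finset.sum_sub_distrib, hc]
    rw [hsf, hqsum]
    show (m : ℝ) / n - (((Finset.univ.filter (fun i => ys i = x)).card : ℝ) / n - ν) / (μ - ν) = _
    field_simp
    ring
  simp only [hloss, div_pow, ← mul_div_assoc]
  rw [← Finset.sum_div]
  have := var_sum (fun i => Q (xs i)) f hQsum hf0
  rw [this]
  simp only [hf2]
  have hqq : ∑ i, q i * (1 - q i) = m * (μ * (1 - μ)) + ((n:ℝ) - m) * (ν * (1 - ν)) := by
    have : ∀ i, q i * (1 - q i) = if xs i = x then μ * (1 - μ) else ν * (1 - ν) := by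
      intro i; simp only [hq]
      by_cases h : xs i = x
      · simp only [if_pos h]
      · simp only [if_neg h]
    rw [Finset.sum_congr rfl fun i _ => this i]
    rw [Finset.sum_ite, Finset.sum_const, Finset.sum_const]
    have hcard : (Finset.univ.filter (fun i => xs i = x)).card
        + (Finset.univ.filter (fun i => ¬ xs i = x)).card = n := by
      rw [Finset.card_filter_add_card_filter_not]; simp
    have h2 : ((Finset.univ.filter (fun i => ¬ xs i = x)).card : ℝ) = (n : ℝ) - m := by
      rw [hm]; push_cast [← hcard]; ring
    simp only [nsmul_eq_mul, h2, hm]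
  rw [hqq]
  show ((m:ℝ) * (μ * (1 - μ)) + ((n:ℝ) - m) * (ν * (1 - ν))) / ((n:ℝ) * (μ - ν))^2
      = (k + E - 2) / (n * (E - 1)^2) + ((m:ℝ) / n) * (k - 2) / (n * (E - 1))
  show ((m:ℝ) * (E / (k + E - 1) * (1 - E / (k + E - 1)))
      + ((n:ℝ) - m) * (1 / (k + E - 1) * (1 - 1 / (k + E - 1)))) / ((n:ℝ) * (E / (k + E - 1) - 1 / (k + E - 1)))^2 = _
  have hE10 : E - 1 ≠ 0 := by nlinarith
  field_simp
  ring
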